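/- There do not exist elements a, b, c ∈ Q with a < b < c, b − a ≥ 4 and c − b ≥ 4, such that a • b = b • c = a • c. -/
import Mathlib


/-- A natural number is an SP number if it is a prime times a square `k^2` with `k ≥ 2`. -/
def IsSP (n : ℕ) : Prop := ∃ p k : ℕ, p.Prime ∧ 2 ≤ k ∧ n = p * k ^ 2

/-- `Qset` consists of `1` together with all SP numbers. -/
def Qset : Set ℕ := {n | n = 1 ∨ IsSP n}

/-- `N x` is the smallest element of `Qset` strictly greater than `x`. -/
noncomputable def N (x : ℕ) : ℕ := sInf {y : ℕ | y ∈ Qset ∧ x < y}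

/-- The loop operation: `dot a b = N (|a - b|)`. -/
noncomputable def dot (a b : ℕ) : ℕ := N ((a : ℤ) - (b : ℤ)).natAbs

lemma mem_Qset_sp {p k : ℕ} (hp : p.Prime) (hk : 2 ≤ k) : p * k ^ 2 ∈ Qset :=
  Or.inr ⟨p, k, hp, hk, rfl⟩

lemma N_spec (x : ℕ) : N x ∈ Qset ∧ x < N x := by
  have : ∃ y, y ∈ {y : ℕ | y ∈ Qset ∧ x < y} := by
    obtain ⟨q, hqx, hq⟩ := Nat.exists_infinite_primes (x + 1)
    exact ⟨q * 2 ^ 2, mem_Qset_sp hq le_rfl, by nlinarith [hq.two_le]⟩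
  exact Nat.sInf_mem this

lemma N_le {x y : ℕ} (hy : y ∈ Qset) (h : x < y) : N x ≤ y :=
  Nat.sInf_le ⟨hy, h⟩

lemma key (d1 d2 : ℕ) (h4 : 4 ≤ d1) (hle : d1 ≤ d2)
    (h1 : N d1 = N (d1 + d2)) (h2 : N d2 = N (d1 + d2)) : False := by
  obtain ⟨hmQ, hmgt⟩ := N_spec (d1 + d2)
  set m := N (d1 + d2) with hmdef
  have F1 : ∀ y, y ∈ Qset → d1 < y → m ≤ y := fun y hy h => h1 ▸ N_le hy h
  have F2 : ∀ y, y ∈ Qset → d2 < y → m ≤ y := fun y hy h => h2 ▸ N_le hy h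
  have hm1 : m ≠ 1 := by omega
  obtain ⟨p, k, hp, hk, hm⟩ := hmQ.resolve_left hm1
  have hp2 := hp.two_le
  obtain hk2 | hk3 | hk4 : k = 2 ∨ k = 3 ∨ 4 ≤ k := by omega
  · -- k = 2, m = 4p
    subst hk2
    have hm' : m = 4 * p := by rw [hm]; ring
    have hp3 : 3 ≤ p := by omega
    obtain ⟨q, hq, hq1, hq2⟩ := Nat.exists_prime_lt_and_le_two_mul ((p - 1) / 2) (by omega)
    have hodd : p % 2 = 1 := (hp.eq_two_or_odd).resolve_left (by omega)
    have hQq : q * 2 ^ 2 ∈ Qset := mem_Qset_sp hq le_rfl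
    have hq4 : q * 2 ^ 2 = 4 * q := by ring
    have hd1 : d1 < q * 2 ^ 2 := by omega
    have := F1 _ hQq hd1
    omega
  · -- k = 3, m = 9p
    subst hk3
    have hm' : m = 9 * p := by rw [hm]; ring
    have hQ4 : p * 2 ^ 2 ∈ Qset := mem_Qset_sp hp le_rfl
    have hp4 : p * 2 ^ 2 = 4 * p := by ring
    have hA1 : p * 2 ^ 2 ≤ d1 := by
      by_contra h
      have := F1 _ hQ4 (by omega)
      omega
    have hA2 : p * 2 ^ 2 ≤ d2 := by
      by_contra h
      have := F2 _ hQ4 (by omega)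
      omega
    rcases eq_or_lt_of_le hp2 with hp2' | hp3
    · -- p = 2, m = 18, d1 = 8
      have hQ12 : 3 * 2 ^ 2 ∈ Qset := mem_Qset_sp (by norm_num) le_rfl
      have := F1 _ hQ12 (by norm_num; omega)
      norm_num at this
      omega
    · obtain ⟨q, hq, hq1, hq2⟩ := Nat.exists_prime_lt_and_le_two_mul ((p - 1) / 2) (by omega)
      have hodd : p % 2 = 1 := (hp.eq_two_or_odd).resolve_left (by omega)
      have hQQ : q * 3 ^ 2 ∈ Qset := mem_Qset_sp hq (by norm_num)
      have hq9 : q * 3 ^ 2 = 9 * q := by ring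
      have hd1 : d1 < q * 3 ^ 2 := by omega
      have := F1 _ hQQ hd1
      omega
  · -- k ≥ 4
    obtain ⟨j, rfl⟩ : ∃ j, k = j + 1 := ⟨k - 1, by omega⟩
    have hj : 3 ≤ j := by omega
    have hQj : p * j ^ 2 ∈ Qset := mem_Qset_sp hp (by omega)
    have hlt : p * j ^ 2 < p * (j + 1) ^ 2 := by nlinarith [hp.pos]
    have hA1 : p * j ^ 2 ≤ d1 := by
      by_contra h
      have := F1 _ hQj (by omega)
      omega
    have hA2 : p * j ^ 2 ≤ d2 := by
      by_contra h
      have := F2 _ hQj (by omega)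
      omega
    nlinarith [hp2, hj, hA1, hA2, hmgt, hm]

theorem no_equal_triple :
    ¬ ∃ a b c : ℕ, a ∈ Qset ∧ b ∈ Qset ∧ c ∈ Qset ∧
      a < b ∧ b < c ∧ 4 ≤ b - a ∧ 4 ≤ c - b ∧
      dot a b = dot b c ∧ dot b c = dot a c := by
  rintro ⟨a, b, c, _, _, _, hab, hbc, h4ab, h4bc, e1, e2⟩
  have hab' : ((a : ℤ) - b).natAbs = b - a := by omega
  have hbc' : ((b : ℤ) - c).natAbs = c - b := by omega
  have hac' : ((a : ℤ) - c).natAbs = (b - a) + (c - b) := by omega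
  rw [dot, dot, hab', hbc'] at e1
  rw [dot, dot, hbc', hac'] at e2
  rcases le_total (b - a) (c - b) with h | h
  · exact key (b - a) (c - b) h4ab h (e1.trans e2) e2
  · exact key (c - b) (b - a) h4bc h (by rw [Nat.add_comm]; exact e2)
      (by rw [Nat.add_comm]; exact e1.trans e2)
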